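/- For any positive integers a_1, …, a_n and b_1, …, b_k, the lengths of continued fraction cylinders satisfy the bounded distortion property: 1/2 ≤ |I_{n+k}(a_1, …, a_n, b_1, …, b_k)| / (|I_n(a_1, …, a_n)| · |I_k(b_1, …, b_k)|) ≤ 2. -/

import Mathlib

open MeasureTheory

def contQ : List ℕ → ℕ
  | [] => 1
  | [a] => a
  | a :: b :: l => a * contQ (b :: l) + contQ l

noncomputable def gaussMap (x : ℝ) : ℝ := Int.fract (1 / x)

noncomputable def cfDigit (n : ℕ) (x : ℝ) : ℤ := ⌊1 / (gaussMap^[n] x)⌋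

def cylinder (l : List ℕ) : Set ℝ :=
  {x | x ∈ Set.Ioo (0 : ℝ) 1 ∧ ∀ i : Fin l.length, cfDigit i x = l.get i}

/-- pair (continuant, continuant of tail) -/
def mp : List ℕ → ℕ × ℕ
  | [] => (1, 0)
  | a :: l => (a * (mp l).1 + (mp l).2, (mp l).1)

def mq (l : List ℕ) : ℕ := (mp l).1
def mr (l : List ℕ) : ℕ := (mp l).2

@[simp] lemma mq_nil : mq [] = 1 := rfl
@[simp] lemma mr_nil : mr [] = 0 := rfl
@[simp] lemma mq_cons (a : ℕ) (l : List ℕ) : mq (a :: l) = a * mq l + mr l := rfl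
@[simp] lemma mr_cons (a : ℕ) (l : List ℕ) : mr (a :: l) = mq l := rfl

lemma contQ_eq_mq : ∀ l : List ℕ, contQ l = mq l
  | [] => rfl
  | [a] => by simp [contQ, mq, mr, mp]
  | a :: b :: l => by
    rw [contQ, contQ_eq_mq (b :: l), contQ_eq_mq l]; rfl

noncomputable def nd : List ℕ → ℝ → ℝ × ℝ
  | [], t => (t, 1)
  | a :: l, t => ((nd l t).2, a * (nd l t).2 + (nd l t).1)

@[simp] lemma nd_nil (t : ℝ) : nd [] t = (t, 1) := rfl
@[simp] lemma nd_cons (a : ℕ) (l : List ℕ) (t : ℝ) :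
    nd (a :: l) t = ((nd l t).2, a * (nd l t).2 + (nd l t).1) := rfl

noncomputable def phi : List ℕ → ℝ → ℝ
  | [], t => t
  | a :: l, t => 1 / (a + phi l t)

@[simp] lemma phi_nil (t : ℝ) : phi [] t = t := rfl
@[simp] lemma phi_cons (a : ℕ) (l : List ℕ) (t : ℝ) :
    phi (a :: l) t = 1 / (a + phi l t) := rfl

lemma nd_pos (l : List ℕ) (hp : ∀ x ∈ l, 0 < x) {t : ℝ} (ht : 0 ≤ t) :
    0 ≤ (nd l t).1 ∧ 1 ≤ (nd l t).2 := by
  induction l with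
  | nil => simpa using ht
  | cons a l ih =>
    have ha : 1 ≤ (a : ℝ) := by
      have := hp a (List.mem_cons_self); exact_mod_cast this
    obtain ⟨h1, h2⟩ := ih (fun x hx => hp x (List.mem_cons_of_mem _ hx))
    rw [nd_cons]
    exact ⟨by dsimp only; linarith, by dsimp only; nlinarith⟩

lemma phi_nonneg (l : List ℕ) (hp : ∀ x ∈ l, 0 < x) {t : ℝ} (ht : 0 ≤ t) :
    0 ≤ phi l t := by
  induction l with
  | nil => simpa using ht
  | cons a l ih =>
    have ha : 1 ≤ (a : ℝ) := by
      have := hp a (List.mem_cons_self); exact_mod_cast this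
    have h := ih (fun x hx => hp x (List.mem_cons_of_mem _ hx))
    simp only [phi_cons]
    positivity

lemma phi_eq (l : List ℕ) (hp : ∀ x ∈ l, 0 < x) {t : ℝ} (ht : 0 ≤ t) :
    phi l t = (nd l t).1 / (nd l t).2 := by
  induction l with
  | nil => simp
  | cons a l ih =>
    have ha : 1 ≤ (a : ℝ) := by
      have := hp a (List.mem_cons_self); exact_mod_cast this
    have hp' : ∀ x ∈ l, 0 < x := fun x hx => hp x (List.mem_cons_of_mem _ hx)
    obtain ⟨h1, h2⟩ := nd_pos l hp' ht
    rw [phi_cons, ih hp', nd_cons]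
    have hd : (nd l t).2 ≠ 0 := by linarith
    have hd2 : (a : ℝ) * (nd l t).2 + (nd l t).1 ≠ 0 := by nlinarith
    field_simp

lemma phi_mem_Ioo (l : List ℕ) (hp : ∀ x ∈ l, 0 < x) {t : ℝ} (ht : t ∈ Set.Ioo (0:ℝ) 1) :
    phi l t ∈ Set.Ioo (0:ℝ) 1 := by
  induction l with
  | nil => simpa using ht
  | cons a l ih =>
    have ha : 1 ≤ (a : ℝ) := by
      have := hp a (List.mem_cons_self); exact_mod_cast this
    obtain ⟨h1, h2⟩ := ih (fun x hx => hp x (List.mem_cons_of_mem _ hx))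
    simp only [phi_cons, Set.mem_Ioo]
    constructor
    · positivity
    · rw [div_lt_one (by linarith)]; linarith

lemma phi_mem_cylinder (l : List ℕ) (hp : ∀ x ∈ l, 0 < x) {t : ℝ}
    (ht : t ∈ Set.Ioo (0:ℝ) 1) : phi l t ∈ cylinder l := by
  induction l with
  | nil => exact ⟨by simpa using ht, fun i => i.elim0⟩
  | cons a l ih =>
    have ha : 1 ≤ (a : ℝ) := by
      have := hp a (List.mem_cons_self); exact_mod_cast this
    have hp' : ∀ x ∈ l, 0 < x := fun x hx => hp x (List.mem_cons_of_mem _ hx)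
    have hs := phi_mem_Ioo l hp' ht
    set s := phi l t with hsdef
    have hx : phi (a :: l) t = 1 / ((a : ℝ) + s) := phi_cons a l t
    have has : (0:ℝ) < (a:ℝ) + s := by linarith [hs.1]
    have hinv : 1 / (phi (a :: l) t) = (a:ℝ) + s := by rw [hx, one_div_one_div]
    have hcast : ((a:ℝ) + s) = s + ((a:ℤ) : ℝ) := by push_cast; ring
    have hfl0 : ⌊s⌋ = 0 := Int.floor_eq_zero_iff.2 ⟨hs.1.le, hs.2⟩
    have hgauss : gaussMap (phi (a :: l) t) = s := by
      rw [gaussMap, hinv, hcast, Int.fract_add_intCast, Int.fract_eq_self.2 ⟨hs.1.le, hs.2⟩]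
    have hfloor : ⌊1 / phi (a :: l) t⌋ = (a : ℤ) := by
      rw [hinv, hcast, Int.floor_add_intCast, hfl0, zero_add]
    refine ⟨phi_mem_Ioo _ hp ht, fun i => ?_⟩
    refine Fin.cases ?_ (fun j => ?_) i
    · simpa [cfDigit] using hfloor
    · have hd := (ih hp').2 j
      simp only [cfDigit] at hd ⊢
      simp only [Fin.val_succ, Function.iterate_succ_apply, hgauss, List.get]
      exact hd

lemma cylinder_eq_phi (l : List ℕ) (hp : ∀ x ∈ l, 0 < x) {x : ℝ}
    (hx : x ∈ cylinder l) : ∃ t ∈ Set.Ico (0:ℝ) 1, x = phi l t := by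
  induction l generalizing x with
  | nil => exact ⟨x, ⟨hx.1.1.le, hx.1.2⟩, rfl⟩
  | cons a l ih =>
    obtain ⟨⟨hx0, hx1⟩, hd⟩ := hx
    have ha : 0 < a := hp a (List.mem_cons_self)
    have hp' : ∀ x ∈ l, 0 < x := fun x hx => hp x (List.mem_cons_of_mem _ hx)
    have hfl : ⌊1/x⌋ = (a:ℤ) := by
      have h0 := hd ⟨0, by simp⟩
      simpa [cfDigit] using h0
    set y := gaussMap x with hy
    have hy0 : 0 ≤ y := Int.fract_nonneg _
    have hy1 : y < 1 := Int.fract_lt_one _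
    have hxy : 1/x = (a:ℝ) + y := by
      have h := Int.floor_add_fract (1/x)
      rw [hfl] at h
      rw [hy, gaussMap]
      push_cast at h
      linarith
    have hxeq : x = 1/((a:ℝ) + y) := by rw [← hxy, one_div_one_div]
    have hdig : ∀ i : Fin l.length, cfDigit i y = l.get i := by
      intro i
      have h := hd i.succ
      simp only [cfDigit, Fin.val_succ, Function.iterate_succ_apply] at h ⊢
      simpa [List.get] using h
    rcases l with _ | ⟨c, l'⟩
    · exact ⟨y, ⟨hy0, hy1⟩, by rw [phi_cons, phi_nil, hxeq]⟩
    · have hypos : 0 < y := by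
        rcases eq_or_lt_of_le hy0 with h | h
        · exfalso
          have h0 := hdig ⟨0, by simp⟩
          have hc : 0 < c := hp' c (List.mem_cons_self)
          rw [← h] at h0
          simp [cfDigit, List.get] at h0
          omega
        · exact h
      obtain ⟨t, ht, hyt⟩ := ih hp' ⟨⟨hypos, hy1⟩, hdig⟩
      exact ⟨t, ht, by rw [phi_cons, ← hyt, hxeq]⟩

lemma phi_between (l : List ℕ) (hp : ∀ x ∈ l, 0 < x) {t : ℝ} (ht : t ∈ Set.Icc (0:ℝ) 1) :
    phi l t ∈ Set.Icc (min (phi l 0) (phi l 1)) (max (phi l 0) (phi l 1)) := by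
  induction l with
  | nil => simpa using ht
  | cons a l ih =>
    have ha : 1 ≤ (a : ℝ) := by
      have := hp a (List.mem_cons_self); exact_mod_cast this
    have hp' : ∀ x ∈ l, 0 < x := fun x hx => hp x (List.mem_cons_of_mem _ hx)
    have h0 := phi_nonneg l hp' (le_refl (0:ℝ))
    have h1 := phi_nonneg l hp' zero_le_one
    have htn := phi_nonneg l hp' ht.1
    have hs := ih hp'
    rw [Set.mem_Icc] at hs ⊢
    simp only [phi_cons]
    rcases le_total (phi l 0) (phi l 1) with h | h
    · rw [min_eq_left h, max_eq_right h] at hs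
      have k1 : 1/((a:ℝ) + phi l 1) ≤ 1/((a:ℝ) + phi l t) :=
        one_div_le_one_div_of_le (by linarith) (by linarith [hs.2])
      have k2 : 1/((a:ℝ) + phi l t) ≤ 1/((a:ℝ) + phi l 0) :=
        one_div_le_one_div_of_le (by linarith) (by linarith [hs.1])
      exact ⟨le_trans (min_le_right _ _) k1, le_trans k2 (le_max_left _ _)⟩
    · rw [min_eq_right h, max_eq_left h] at hs
      have k1 : 1/((a:ℝ) + phi l 0) ≤ 1/((a:ℝ) + phi l t) :=
        one_div_le_one_div_of_le (by linarith) (by linarith [hs.2])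
      have k2 : 1/((a:ℝ) + phi l t) ≤ 1/((a:ℝ) + phi l 1) :=
        one_div_le_one_div_of_le (by linarith) (by linarith [hs.1])
      exact ⟨le_trans (min_le_left _ _) k1, le_trans k2 (le_max_right _ _)⟩

lemma nd_det (l : List ℕ) :
    (nd l 1).1 * (nd l 0).2 - (nd l 0).1 * (nd l 1).2 = (-1 : ℝ) ^ l.length := by
  induction l with
  | nil => simp
  | cons a l ih =>
    simp only [nd_cons, List.length_cons, pow_succ]
    linear_combination (-1 : ℝ) * ih

lemma nd_zero (l : List ℕ) : nd l 0 = ((mr l : ℝ), (mq l : ℝ)) := by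
  induction l with
  | nil => simp
  | cons a l ih =>
    rw [nd_cons, ih, mq_cons, mr_cons, Prod.mk.injEq]
    constructor
    · rfl
    · dsimp only; push_cast; ring

lemma nd_one (l : List ℕ) (hl : l ≠ []) :
    nd l 1 = (((mr l + mr l.dropLast : ℕ) : ℝ), ((mq l + mq l.dropLast : ℕ) : ℝ)) := by
  match l with
  | [a] =>
    show ((1 : ℝ), (a : ℝ) * 1 + 1) = _
    rw [Prod.mk.injEq]
    constructor <;> simp [mq, mr, mp]
  | a :: b :: l =>
    have ih := nd_one (b :: l) (by simp)
    rw [nd_cons, ih, List.dropLast_cons₂, Prod.mk.injEq]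
    constructor <;> (dsimp only; simp only [mq_cons, mr_cons]; try push_cast; try ring)

lemma phi_continuousOn (l : List ℕ) (hp : ∀ x ∈ l, 0 < x) :
    ContinuousOn (phi l) (Set.Icc 0 1) := by
  induction l with
  | nil => exact continuousOn_id.congr (fun t _ => phi_nil t)
  | cons a l ih =>
    have ha : 1 ≤ (a : ℝ) := by
      have := hp a (List.mem_cons_self); exact_mod_cast this
    have hp' : ∀ x ∈ l, 0 < x := fun x hx => hp x (List.mem_cons_of_mem _ hx)
    have heq : ∀ t, phi (a :: l) t = 1 / ((a : ℝ) + phi l t) := fun t => phi_cons a l t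
    refine ContinuousOn.congr ?_ (fun t _ => heq t)
    exact continuousOn_const.div (continuousOn_const.add (ih hp'))
      (fun t ht => by have := phi_nonneg l hp' ht.1; positivity)

lemma volume_cylinder (l : List ℕ) (hp : ∀ x ∈ l, 0 < x) :
    (volume (cylinder l)).toReal = 1 / ((nd l 0).2 * (nd l 1).2) := by
  have hd0 := nd_pos l hp (le_refl (0:ℝ))
  have hd1 := nd_pos l hp zero_le_one
  set e0 := phi l 0 with he0d
  set e1 := phi l 1 with he1d
  have he0 : e0 = (nd l 0).1 / (nd l 0).2 := phi_eq l hp le_rfl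
  have he1 : e1 = (nd l 1).1 / (nd l 1).2 := phi_eq l hp zero_le_one
  have hdp : (0:ℝ) < (nd l 0).2 * (nd l 1).2 := by nlinarith [hd0.2, hd1.2]
  have hdiff : e1 - e0 = ((-1:ℝ))^l.length / ((nd l 0).2 * (nd l 1).2) := by
    have h0 : (nd l 0).2 ≠ 0 := by linarith [hd0.2]
    have h1 : (nd l 1).2 ≠ 0 := by linarith [hd1.2]
    rw [he0, he1, ← nd_det l]
    field_simp
  have habs : |e1 - e0| = 1 / ((nd l 0).2 * (nd l 1).2) := by
    rw [hdiff, abs_div, abs_pow, abs_neg, abs_one, one_pow, abs_of_pos hdp]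
  have hsub : Set.Ioo (min e0 e1) (max e0 e1) ⊆ cylinder l := by
    intro x hx
    rcases le_total e0 e1 with h | h
    · rw [min_eq_left h, max_eq_right h] at hx
      obtain ⟨t, ht, hxt⟩ := intermediate_value_Ioo zero_le_one (phi_continuousOn l hp) hx
      exact hxt ▸ phi_mem_cylinder l hp ht
    · rw [min_eq_right h, max_eq_left h] at hx
      obtain ⟨t, ht, hxt⟩ := intermediate_value_Ioo' zero_le_one (phi_continuousOn l hp) hx
      exact hxt ▸ phi_mem_cylinder l hp ht
  have hsup : cylinder l ⊆ Set.Icc (min e0 e1) (max e0 e1) := by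
    intro x hx
    obtain ⟨t, ht, hxt⟩ := cylinder_eq_phi l hp hx
    have := phi_between l hp (Set.Ico_subset_Icc_self ht)
    rw [hxt]
    exact this
  have hvol : volume (cylinder l) = ENNReal.ofReal (max e0 e1 - min e0 e1) := by
    refine le_antisymm ?_ ?_
    · calc volume (cylinder l) ≤ volume (Set.Icc (min e0 e1) (max e0 e1)) := measure_mono hsup
        _ = ENNReal.ofReal (max e0 e1 - min e0 e1) := Real.volume_Icc
    · calc ENNReal.ofReal (max e0 e1 - min e0 e1)
          = volume (Set.Ioo (min e0 e1) (max e0 e1)) := Real.volume_Ioo.symm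
        _ ≤ volume (cylinder l) := measure_mono hsub
  have hmm : max e0 e1 - min e0 e1 = |e1 - e0| := by
    rcases le_total e0 e1 with h | h
    · rw [min_eq_left h, max_eq_right h, abs_of_nonneg (by linarith)]
    · rw [min_eq_right h, max_eq_left h, abs_of_nonpos (by linarith)]; ring
  rw [hvol, hmm, habs, ENNReal.toReal_ofReal (by positivity)]

lemma mq_mr_concat : ∀ (a : List ℕ), ∀ (b : List ℕ), a ≠ [] →
    mq (a ++ b) = mq a * mq b + mq a.dropLast * mr b ∧
      mr (a ++ b) = mr a * mq b + mr a.dropLast * mr b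
  | [x], b, _ => by simp [mq, mr, mp]
  | x :: y :: a, b, _ => by
    have ih := mq_mr_concat (y :: a) b (by simp)
    have e : (x :: y :: a) ++ b = x :: (y :: a ++ b) := rfl
    rw [e, mq_cons, mr_cons, ih.1, ih.2, List.dropLast_cons₂]
    simp only [mq_cons, mr_cons]
    exact ⟨by ring, trivial⟩

lemma mq_concat (a b : List ℕ) (ha : a ≠ []) :
    mq (a ++ b) = mq a * mq b + mq a.dropLast * mr b :=
  (mq_mr_concat a b ha).1

lemma mq_pos (l : List ℕ) (hp : ∀ x ∈ l, 0 < x) : 1 ≤ mq l := by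
  induction l with
  | nil => simp
  | cons a l ih =>
    have ha : 1 ≤ a := hp a (List.mem_cons_self)
    have h := ih (fun x hx => hp x (List.mem_cons_of_mem _ hx))
    rw [mq_cons]
    calc 1 ≤ a * mq l := Nat.one_le_iff_ne_zero.2 (by positivity)
    _ ≤ a * mq l + mr l := Nat.le_add_right _ _

lemma mr_le_mq (l : List ℕ) (hp : ∀ x ∈ l, 0 < x) : mr l ≤ mq l := by
  cases l with
  | nil => simp
  | cons a l =>
    have ha : 1 ≤ a := hp a (List.mem_cons_self)
    rw [mq_cons, mr_cons]
    calc mq l = 1 * mq l := (one_mul _).symm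
    _ ≤ a * mq l := Nat.mul_le_mul_right _ ha
    _ ≤ a * mq l + mr l := Nat.le_add_right _ _

lemma mq_dropLast_le (l : List ℕ) (hp : ∀ x ∈ l, 0 < x) :
    mq l.dropLast ≤ mq l ∧ mr l.dropLast ≤ mr l := by
  match l with
  | [] => simp
  | [a] =>
    have ha : 1 ≤ a := hp a (List.mem_cons_self)
    constructor
    · show 1 ≤ a * 1 + 0; omega
    · show 0 ≤ 1; omega
  | a :: b :: l =>
    have ih := mq_dropLast_le (b :: l) (fun x hx => hp x (List.mem_cons_of_mem _ hx))
    rw [List.dropLast_cons₂]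
    refine ⟨?_, ?_⟩
    · rw [mq_cons, mq_cons]
      exact Nat.add_le_add (Nat.mul_le_mul_left _ ih.1) ih.2
    · rw [mr_cons, mr_cons]; exact ih.1

theorem stmt4 (a b : List ℕ) (ha : a ≠ []) (hb : b ≠ [])
    (hpa : ∀ x ∈ a, 0 < x) (hpb : ∀ x ∈ b, 0 < x) :
    1 / 2 ≤ (volume (cylinder (a ++ b))).toReal /
        ((volume (cylinder a)).toReal * (volume (cylinder b)).toReal) ∧
      (volume (cylinder (a ++ b))).toReal /
        ((volume (cylinder a)).toReal * (volume (cylinder b)).toReal) ≤ 2 := by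
  have hpab : ∀ x ∈ a ++ b, 0 < x := by
    intro x hx
    rcases List.mem_append.1 hx with h | h
    exacts [hpa x h, hpb x h]
  have hpa' : ∀ x ∈ a.dropLast, 0 < x := fun x hx => hpa x (List.dropLast_subset a hx)
  have hpb' : ∀ x ∈ b.dropLast, 0 < x := fun x hx => hpb x (List.dropLast_subset b hx)
  have key : ∀ l : List ℕ, l ≠ [] → (∀ x ∈ l, 0 < x) →
      (volume (cylinder l)).toReal = 1 / ((mq l * (mq l + mq l.dropLast) : ℕ) : ℝ) := by
    intro l hl hp
    rw [volume_cylinder l hp, nd_zero, nd_one l hl]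
    push_cast
    ring_nf
  -- notation
  set qa := mq a with hqa
  set pa := mq a.dropLast with hpa2
  set qb := mq b with hqb
  set pb := mq b.dropLast with hpb2
  set tb := mr b with htb
  set sb := mr b.dropLast with hsb
  have hdl : (a ++ b).dropLast = a ++ b.dropLast := by
    cases b with
    | nil => simp at hb
    | cons c l => exact List.dropLast_append_cons
  have hQ : mq (a ++ b) = qa * qb + pa * tb := mq_concat a b ha
  have hS : mq ((a ++ b).dropLast) = qa * pb + pa * sb := by
    rw [hdl]; exact mq_concat a b.dropLast ha
  -- nat inequalities
  have h1qa : 1 ≤ qa := mq_pos a hpa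
  have h1qb : 1 ≤ qb := mq_pos b hpb
  have h1pa : 1 ≤ pa := mq_pos a.dropLast hpa'
  have h1pb : 1 ≤ pb := mq_pos b.dropLast hpb'
  have hpaqa : pa ≤ qa := (mq_dropLast_le a hpa).1
  have htbqb : tb ≤ qb := mr_le_mq b hpb
  have hsbpb : sb ≤ pb := mr_le_mq b.dropLast hpb'
  set Q := qa * qb + pa * tb with hQd
  set S := qa * pb + pa * sb with hSd
  set X := Q * (Q + S) with hXd
  set Y := qa * (qa + pa) with hYd
  set Z := qb * (qb + pb) with hZd
  have hQ1 : Q ≤ (qa + pa) * qb := by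
    have h := Nat.mul_le_mul_left pa htbqb
    calc Q = qa * qb + pa * tb := hQd
      _ ≤ qa * qb + pa * qb := Nat.add_le_add_left h _
      _ = (qa + pa) * qb := by ring
  have hQS1 : Q + S ≤ (qa + pa) * (qb + pb) := by
    have h1 := Nat.mul_le_mul_left pa htbqb
    have h2 := Nat.mul_le_mul_left pa hsbpb
    calc Q + S = qa * qb + pa * tb + (qa * pb + pa * sb) := by rw [hQd, hSd]
      _ ≤ qa * qb + pa * qb + (qa * pb + pa * pb) :=
        Nat.add_le_add (Nat.add_le_add_left h1 _) (Nat.add_le_add_left h2 _)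
      _ = (qa + pa) * (qb + pb) := by ring
  have hQ2 : qa * qb ≤ Q := Nat.le_add_right _ _
  have hQS2 : qa * (qb + pb) ≤ Q + S := by
    calc qa * (qb + pb) = qa * qb + qa * pb := by ring
      _ ≤ (qa * qb + pa * tb) + (qa * pb + pa * sb) :=
        Nat.add_le_add (Nat.le_add_right _ _) (Nat.le_add_right _ _)
      _ = Q + S := by rw [hQd, hSd]
  have N1 : X ≤ 2 * (Y * Z) := by
    calc X ≤ ((qa + pa) * qb) * ((qa + pa) * (qb + pb)) := Nat.mul_le_mul hQ1 hQS1
      _ ≤ ((qa + pa) * qb) * ((2 * qa) * (qb + pb)) :=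
        Nat.mul_le_mul_left _ (Nat.mul_le_mul_right _ (by omega))
      _ = 2 * (Y * Z) := by rw [hYd, hZd]; ring
  have N2 : Y * Z ≤ 2 * X := by
    calc Y * Z ≤ (qa * (2 * qa)) * Z := Nat.mul_le_mul_right _ (Nat.mul_le_mul_left _ (by omega))
      _ = 2 * ((qa * qb) * (qa * (qb + pb))) := by rw [hZd]; ring
      _ ≤ 2 * (Q * (Q + S)) := Nat.mul_le_mul_left _ (Nat.mul_le_mul hQ2 hQS2)
  -- real part
  have hvab : (volume (cylinder (a ++ b))).toReal = 1 / (X : ℝ) := by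
    rw [key (a ++ b) (by simp [ha]) hpab, hQ, hS]
  have hva : (volume (cylinder a)).toReal = 1 / (Y : ℝ) := key a ha hpa
  have hvb : (volume (cylinder b)).toReal = 1 / (Z : ℝ) := key b hb hpb
  have hQpos : 0 < Q := Nat.lt_of_lt_of_le (Nat.mul_pos h1qa h1qb) hQ2
  have hXpos : 0 < X := Nat.mul_pos hQpos (Nat.lt_of_lt_of_le hQpos (Nat.le_add_right _ _))
  have hYpos : 0 < Y := Nat.mul_pos h1qa (by omega)
  have hZpos : 0 < Z := Nat.mul_pos h1qb (by omega)
  have hXr : (0:ℝ) < (X:ℕ) := by exact_mod_cast hXpos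
  have hYr : (0:ℝ) < (Y:ℕ) := by exact_mod_cast hYpos
  have hZr : (0:ℝ) < (Z:ℕ) := by exact_mod_cast hZpos
  rw [hvab, hva, hvb]
  have hexp : (1 / (X:ℝ)) / ((1 / (Y:ℝ)) * (1 / (Z:ℝ))) = ((Y:ℝ) * Z) / X := by
    field_simp
  rw [hexp]
  constructor
  · rw [le_div_iff₀ hXr]
    have hc : (X:ℝ) ≤ 2 * ((Y:ℝ) * (Z:ℝ)) := by exact_mod_cast N1
    linarith
  · rw [div_le_iff₀ hXr]
    have hc : ((Y:ℝ) * (Z:ℝ)) ≤ 2 * (X:ℝ) := by exact_mod_cast N2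
    linarith
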